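/- Let S ⊆ H with |S| > 1 and h_0 ∈ S with π_S(h_0) > 1/2, and let T^g_S be the corresponding subtree of the greedy query tree, with R_0 = S \ {h_0}. Then the cost of identifying h_0 in the greedy subtree satisfies c_{T^g_S}(h_0) ≤ 2 · C*(h_0) · ( ln( π(R_0) / min_{h∈R_0} π(h) ) + 1 ), where C*(h_0) is the cost of identifying h_0 in any query tree T* whose leaves contain S. -/

import Mathlib

open Finset

namespace ActiveLearning

variable {H A : Type*} {m : ℕ}

/-- The total mass of a weight function `v` on a finite set `S`. -/
def mass (v : H → ℝ) (S : Finset H) : ℝ := ∑ s ∈ S, v s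

/-- `v` restricted to `S` and normalized. -/
noncomputable def restrict [DecidableEq H] (v : H → ℝ) (S : Finset H) : H → ℝ :=
  fun h => if h ∈ S then v h / mass v S else 0

/-- The shrinkage `Δ` of a question `qi` on `(S, v)`. -/
noncomputable def shrink [Fintype A] [DecidableEq A] (qi : H → A)
    (S : Finset H) (v : H → ℝ) : ℝ :=
  mass v S - ∑ j : A, (mass v (S.filter fun s => qi s = j)) ^ 2 / mass v S

/-- The collision probability of a distribution `v`. -/
def CP [Fintype H] (v : H → ℝ) : ℝ := ∑ z : H, (v z) ^ 2

/-- Query trees: internal nodes are questions (indexed by `Fin m`), branches are answers,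
leaves are hypotheses. -/
inductive QTree (m : ℕ) (H A : Type*) : Type _
  | leaf : H → QTree m H A
  | node : Fin m → (A → QTree m H A) → QTree m H A

/-- Follow the answers of hypothesis `h` down the tree, returning the leaf reached. -/
def follow (q : Fin m → H → A) : QTree m H A → H → H
  | .leaf h', _ => h'
  | .node i ch, h => follow q (ch (q i h)) h

/-- The cost `c_T(h)`: sum of costs of the questions on the root-to-`h` path. -/
def pathCost (q : Fin m → H → A) (c : Fin m → ℝ) : QTree m H A → H → ℝ
  | .leaf _, _ => 0
  | .node i ch, h => c i + pathCost q c (ch (q i h)) h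

/-- The leaves of `T` include `S`: every `h ∈ S` is identified by `T`. -/
def ValidOn (q : Fin m → H → A) (T : QTree m H A) (S : Finset H) : Prop :=
  ∀ h ∈ S, follow q T h = h

/-- The expected cost `C(T, v)` of a query tree `T` under weights `v`. -/
noncomputable def treeCost [Fintype H] (q : Fin m → H → A) (c : Fin m → ℝ)
    (T : QTree m H A) (v : H → ℝ) : ℝ :=
  ∑ h : H, v h * pathCost q c T h

/-- The questions asked along the root-to-`h` path. -/
def pathQs (q : Fin m → H → A) : QTree m H A → H → List (Fin m)
  | .leaf _, _ => []
  | .node i ch, h => i :: pathQs q (ch (q i h)) h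

/-- `T` is a greedy query tree for `π` on version space `S`: at every node it asks a question
maximizing the shrinkage-cost ratio and recurses on each nonempty answer class. -/
inductive IsGreedy [Fintype A] [DecidableEq A] [DecidableEq H]
    (q : Fin m → H → A) (c : Fin m → ℝ) (π : H → ℝ) :
    QTree m H A → Finset H → Prop
  | leaf (h : H) : IsGreedy q c π (.leaf h) {h}
  | node (S : Finset H) (i : Fin m) (ch : A → QTree m H A)
      (hcard : 1 < S.card)
      (hmax : ∀ j : Fin m,
        shrink (q j) S (restrict π S) / c j ≤ shrink (q i) S (restrict π S) / c i)
      (hch : ∀ a : A, (S.filter fun s => q i s = a).Nonempty →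
        IsGreedy q c π (ch a) (S.filter fun s => q i s = a)) :
      IsGreedy q c π (.node i ch) S

/-- `T` is an `ε`-approximate greedy query tree for `π` on version space `S`. -/
inductive IsApproxGreedy [Fintype A] [DecidableEq A] [DecidableEq H]
    (ε : ℝ) (q : Fin m → H → A) (c : Fin m → ℝ) (π : H → ℝ) :
    QTree m H A → Finset H → Prop
  | leaf (h : H) : IsApproxGreedy ε q c π (.leaf h) {h}
  | node (S : Finset H) (i : Fin m) (ch : A → QTree m H A)
      (hcard : 1 < S.card)
      (happrox : ∀ j : Fin m,
        (1 - ε) * (shrink (q j) S (restrict π S) / c j) ≤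
          shrink (q i) S (restrict π S) / c i)
      (hch : ∀ a : A, (S.filter fun s => q i s = a).Nonempty →
        IsApproxGreedy ε q c π (ch a) (S.filter fun s => q i s = a)) :
      IsApproxGreedy ε q c π (.node i ch) S

/-- `T` is irreducible on version space `S`: every asked question strictly splits the
surviving set. -/
inductive Irreducible [DecidableEq A] (q : Fin m → H → A) :
    QTree m H A → Finset H → Prop
  | leaf (h : H) (S : Finset H) : Irreducible q (.leaf h) S
  | node (S : Finset H) (i : Fin m) (ch : A → QTree m H A)
      (hsplit : ∃ s ∈ S, ∃ t ∈ S, q i s ≠ q i t)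
      (hch : ∀ a : A, (S.filter fun s => q i s = a).Nonempty →
        Irreducible q (ch a) (S.filter fun s => q i s = a)) :
      Irreducible q (.node i ch) S


section Aux

lemma mass_nonneg' {v : H → ℝ} (hv : ∀ h, 0 ≤ v h) (S : Finset H) : 0 ≤ mass v S :=
  Finset.sum_nonneg fun s _ => hv s

lemma mass_pos' {v : H → ℝ} (hv : ∀ h, 0 < v h) {S : Finset H} (hS : S.Nonempty) :
    0 < mass v S :=
  Finset.sum_pos (fun s _ => hv s) hS

lemma mass_mono' {v : H → ℝ} (hv : ∀ h, 0 ≤ v h) {S T : Finset H} (hST : S ⊆ T) :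
    mass v S ≤ mass v T :=
  Finset.sum_le_sum_of_subset_of_nonneg hST fun h _ _ => hv h

lemma mass_restrict' [DecidableEq H] (v : H → ℝ) {S T : Finset H} (hTS : T ⊆ S) :
    mass (restrict v S) T = mass v T / mass v S := by
  unfold mass restrict
  rw [Finset.sum_div]
  exact Finset.sum_congr rfl fun s hs => by rw [if_pos (hTS hs)]; rfl

lemma pathCost_nonneg' (q : Fin m → H → A) {c : Fin m → ℝ} (hc : ∀ i, 0 ≤ c i) :
    ∀ (T : QTree m H A) (h : H), 0 ≤ pathCost q c T h
  | .leaf _, _ => le_refl 0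
  | .node i ch, h => add_nonneg (hc i) (pathCost_nonneg' q hc (ch (q i h)) h)

lemma pathCost_eq_sum (q : Fin m → H → A) (c : Fin m → ℝ) :
    ∀ (T : QTree m H A) (h : H), pathCost q c T h = ((pathQs q T h).map c).sum
  | .leaf _, _ => by simp [pathCost, pathQs]
  | .node i ch, h => by
      simp [pathCost, pathQs, pathCost_eq_sum q c (ch (q i h)) h]

lemma follow_sep (q : Fin m → H → A) :
    ∀ (T : QTree m H A) (s h0 : H), follow q T s = s → follow q T h0 = h0 → s ≠ h0 →
      ∃ j ∈ pathQs q T h0, q j s ≠ q j h0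
  | .leaf h', s, h0, hs, hh, hne => absurd ((hs.symm.trans hh)) hne
  | .node i ch, s, h0, hs, hh, hne => by
      by_cases hq : q i s = q i h0
      · have hs' : follow q (ch (q i h0)) s = s := by
          rw [follow, hq] at hs; exact hs
        have hh' : follow q (ch (q i h0)) h0 = h0 := hh
        obtain ⟨j, hj, hjne⟩ := follow_sep q (ch (q i h0)) s h0 hs' hh' hne
        exact ⟨j, List.mem_cons_of_mem _ hj, hjne⟩
      · exact ⟨i, List.mem_cons_self, hq⟩

lemma mass_fiber_sum [Fintype A] [DecidableEq A] [DecidableEq H] (f : H → A)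
    (v : H → ℝ) (S : Finset H) :
    ∑ a : A, mass v (S.filter fun s => f s = a) = mass v S := by
  unfold mass
  exact Finset.sum_fiberwise S f v

lemma shrink_restrict_eq [Fintype A] [DecidableEq A] [DecidableEq H] (f : H → A)
    {π : H → ℝ} {S : Finset H} (hpos : 0 < mass π S) :
    shrink f S (restrict π S) =
      1 - ∑ a : A, (mass π (S.filter fun s => f s = a) / mass π S) ^ 2 := by
  unfold shrink
  have h1 : mass (restrict π S) S = 1 := by
    rw [mass_restrict' π (Finset.Subset.refl S), div_self hpos.ne']
  rw [h1]
  simp only [div_one]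
  congr 1
  exact Finset.sum_congr rfl fun a _ => by
    rw [mass_restrict' π (Finset.filter_subset _ S)]

lemma shrink_le_two_mul [Fintype A] [DecidableEq A] [DecidableEq H] (f : H → A)
    {π : H → ℝ} {S : Finset H} (hπ : ∀ h, 0 ≤ π h) (hpos : 0 < mass π S) (a0 : A) :
    shrink f S (restrict π S) ≤
      2 * (1 - mass π (S.filter fun s => f s = a0) / mass π S) := by
  rw [shrink_restrict_eq f hpos]
  set m0 := mass π (S.filter fun s => f s = a0) / mass π S with hm0
  have h0 : 0 ≤ m0 := div_nonneg (mass_nonneg' hπ _) hpos.le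
  have h1 : m0 ≤ 1 := by
    rw [hm0, div_le_one hpos]
    exact mass_mono' hπ (Finset.filter_subset _ _)
  have hle : m0 ^ 2 ≤ ∑ a : A, (mass π (S.filter fun s => f s = a) / mass π S) ^ 2 := by
    rw [hm0]
    exact Finset.single_le_sum
      (f := fun a => (mass π (S.filter fun s => f s = a) / mass π S) ^ 2)
      (fun a _ => sq_nonneg _) (Finset.mem_univ a0)
  nlinarith

lemma shrink_ge_w [Fintype A] [DecidableEq A] [DecidableEq H] (f : H → A)
    {π : H → ℝ} {S : Finset H} (hπ : ∀ h, 0 ≤ π h) (hpos : 0 < mass π S)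
    {a0 : A} (hhalf : 1 / 2 < mass π (S.filter fun s => f s = a0) / mass π S) :
    1 - mass π (S.filter fun s => f s = a0) / mass π S ≤ shrink f S (restrict π S) := by
  rw [shrink_restrict_eq f hpos]
  set g : A → ℝ := fun a => mass π (S.filter fun s => f s = a) / mass π S with hg
  have hgnn : ∀ a, 0 ≤ g a := fun a => div_nonneg (mass_nonneg' hπ _) hpos.le
  have hsum : ∑ a : A, g a = 1 := by
    rw [hg, ← Finset.sum_div, mass_fiber_sum, div_self hpos.ne']
  have hsplit : g a0 + ∑ a ∈ Finset.univ.erase a0, g a = 1 := by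
    rw [Finset.add_sum_erase _ g (Finset.mem_univ a0)]; exact hsum
  have hsplit2 : ∑ a : A, g a ^ 2 =
      g a0 ^ 2 + ∑ a ∈ Finset.univ.erase a0, g a ^ 2 :=
    (Finset.add_sum_erase _ (fun a => g a ^ 2) (Finset.mem_univ a0)).symm
  have hsq : ∑ a ∈ Finset.univ.erase a0, g a ^ 2 ≤
      (∑ a ∈ Finset.univ.erase a0, g a) ^ 2 :=
    Finset.sum_sq_le_sq_sum_of_nonneg fun a _ => hgnn a
  have hrest : ∑ a ∈ Finset.univ.erase a0, g a = 1 - g a0 := by linarith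
  have hga0 : 1 / 2 < g a0 := hhalf
  have hga1 : g a0 ≤ 1 := by
    have := Finset.sum_nonneg fun a (_ : a ∈ Finset.univ.erase a0) => hgnn a
    linarith
  rw [hrest] at hsq
  nlinarith

lemma list_sum_swap {R : Finset H} {L : List (Fin m)} (f : H → Fin m → ℝ) :
    ∑ s ∈ R, (L.map (f s)).sum = (L.map fun j => ∑ s ∈ R, f s j).sum := by
  induction L with
  | nil => simp
  | cons j L ih => simp [Finset.sum_add_distrib, ih]

lemma covering_bound [DecidableEq H] [DecidableEq A] (q : Fin m → H → A) {π : H → ℝ}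
    (hπ : ∀ h, 0 ≤ π h) (L : List (Fin m)) (h0 : H) {S' : Finset H}
    (hsep : ∀ s ∈ S'.erase h0, ∃ j ∈ L, q j s ≠ q j h0) :
    mass π (S'.erase h0) ≤
      (L.map fun j => mass π (S'.filter fun s => q j s ≠ q j h0)).sum := by
  have step1 : mass π (S'.erase h0) ≤
      ∑ s ∈ S'.erase h0, (L.map fun j => if q j s ≠ q j h0 then π s else 0).sum := by
    apply Finset.sum_le_sum
    intro s hs
    obtain ⟨j, hjL, hjne⟩ := hsep s hs
    have hmem : π s ∈ L.map fun j => if q j s ≠ q j h0 then π s else 0 := by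
      rw [List.mem_map]
      exact ⟨j, hjL, by simp [hjne]⟩
    refine List.single_le_sum ?_ _ hmem
    intro x hx
    rw [List.mem_map] at hx
    obtain ⟨j', _, rfl⟩ := hx
    split_ifs with h
    · exact hπ s
    · exact le_refl 0
  refine step1.trans ?_
  rw [list_sum_swap]
  apply List.sum_le_sum
  intro j _
  rw [show (fun s => if q j s ≠ q j h0 then π s else 0) =
      (fun s => if q j s ≠ q j h0 then π s else 0) from rfl, ← Finset.sum_filter]
  unfold mass
  apply Finset.sum_le_sum_of_subset_of_nonneg
  · exact Finset.filter_subset_filter _ (Finset.erase_subset _ _)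
  · exact fun h _ _ => hπ h

set_option maxHeartbeats 1000000 in
lemma greedy_key [Fintype A] [DecidableEq H] [DecidableEq A]
    (π : H → ℝ) (hπpos : ∀ h, 0 < π h)
    (q : Fin m → H → A) (c : Fin m → ℝ) (hc : ∀ i, 0 < c i)
    (S : Finset H) (h0 : H) (h0S : h0 ∈ S) (hh0 : 1 / 2 < restrict π S h0)
    (Tstar : QTree m H A) (hTstar : ValidOn q Tstar S)
    (hCpos : 0 < pathCost q c Tstar h0)
    (μ : ℝ) (hμpos : 0 < μ) (hμ : ∀ h ∈ S.erase h0, μ ≤ π h)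
    (Tg : QTree m H A) (S' : Finset H) (hg : IsGreedy q c π Tg S') :
    h0 ∈ S' → S' ⊆ S →
    pathCost q c Tg h0 ≤
      if (S'.erase h0).Nonempty then
        2 * pathCost q c Tstar h0 * (Real.log (mass π (S'.erase h0)) - Real.log μ) +
          2 * pathCost q c Tstar h0
      else 0 := by
  have hπ : ∀ h, 0 ≤ π h := fun h => (hπpos h).le
  set Cs := pathCost q c Tstar h0 with hCs
  induction hg with
  | leaf h =>
    intro hh0' _
    rw [Finset.mem_singleton] at hh0'
    subst hh0'
    simp [pathCost, Finset.erase_singleton]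
  | node S' i ch hcard hmax hch IH =>
    intro hh0' hsub
    -- basic positivity
    have hS'ne : S'.Nonempty := ⟨h0, hh0'⟩
    have hMS' : 0 < mass π S' := mass_pos' hπpos hS'ne
    have hMS : 0 < mass π S := mass_pos' hπpos ⟨h0, h0S⟩
    -- R' nonempty
    have hR'ne : (S'.erase h0).Nonempty := by
      rw [← Finset.card_pos, Finset.card_erase_of_mem hh0']
      omega
    have hW : 0 < mass π (S'.erase h0) := mass_pos' hπpos hR'ne
    set W := mass π (S'.erase h0) with hWdef
    -- μ ≤ W
    have hμW : μ ≤ W := by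
      obtain ⟨s, hs⟩ := hR'ne
      have hsS : s ∈ S.erase h0 := by
        rw [Finset.mem_erase] at hs ⊢
        exact ⟨hs.1, hsub hs.2⟩
      calc μ ≤ π s := hμ s hsS
        _ ≤ W := Finset.single_le_sum (f := π) (fun h _ => hπ h) hs
    -- restricted mass of h0 exceeds 1/2
    have huh0 : 1 / 2 < π h0 / mass π S' := by
      have h1 : restrict π S h0 = π h0 / mass π S := by
        unfold restrict; rw [if_pos h0S]
      have h2 : mass π S' ≤ mass π S := mass_mono' hπ hsub
      have h3 : π h0 / mass π S ≤ π h0 / mass π S' :=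
        div_le_div_of_nonneg_left (hπ h0) hMS' h2
      rw [h1] at hh0
      linarith
    -- shrinkage of the chosen question i
    set K := shrink (q i) S' (restrict π S') with hK
    set a0 := q i h0 with ha0
    set S'' := S'.filter fun s => q i s = a0 with hS''
    have hh0'' : h0 ∈ S'' := by
      rw [hS'', Finset.mem_filter]; exact ⟨hh0', rfl⟩
    -- for every question j, mass of h0's class is > 1/2
    have hclass : ∀ j : Fin m,
        1 / 2 < mass π (S'.filter fun s => q j s = q j h0) / mass π S' := by
      intro j
      have hmem : h0 ∈ S'.filter fun s => q j s = q j h0 := by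
        rw [Finset.mem_filter]; exact ⟨hh0', rfl⟩
      have h1 : π h0 ≤ mass π (S'.filter fun s => q j s = q j h0) :=
        Finset.single_le_sum (f := π) (fun h _ => hπ h) hmem
      have h2 : π h0 / mass π S' ≤
          mass π (S'.filter fun s => q j s = q j h0) / mass π S' := by gcongr
      linarith
    -- for every question j, the separated wrong mass is at most (K / c i) * c j * M
    have hwj : ∀ j : Fin m, mass π (S'.filter fun s => q j s ≠ q j h0) ≤
        (K / c i) * c j * mass π S' := by
      intro j
      have hge := shrink_ge_w (q j) hπ hMS' (hclass j)
      have hBA : mass π (S'.filter fun s => q j s ≠ q j h0)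
          = mass π S' - mass π (S'.filter fun s => q j s = q j h0) := by
        have := Finset.sum_filter_add_sum_filter_not S' (fun s => q j s = q j h0) π
        unfold mass
        simp only [Ne] at *
        linarith [this]
      have hup : shrink (q j) S' (restrict π S') ≤ (K / c i) * c j := by
        have hmaxj := hmax j
        have hcj := hc j
        rw [div_le_div_iff₀ hcj (hc i)] at hmaxj
        calc shrink (q j) S' (restrict π S')
            = shrink (q j) S' (restrict π S') / c j * c j := by
              field_simp
          _ ≤ K / c i * c j := by
              apply mul_le_mul_of_nonneg_right _ hcj.le
              rw [div_le_div_iff₀ hcj (hc i)]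
              exact hmaxj
      have hle : 1 - mass π (S'.filter fun s => q j s = q j h0) / mass π S'
          ≤ (K / c i) * c j := le_trans hge hup
      rw [hBA]
      have := mul_le_mul_of_nonneg_right hle hMS'.le
      rw [sub_mul, one_mul, div_mul_cancel₀ _ hMS'.ne'] at this
      linarith
    -- covering along the Tstar path
    have hsep : ∀ s ∈ S'.erase h0, ∃ j ∈ pathQs q Tstar h0, q j s ≠ q j h0 := by
      intro s hs
      rw [Finset.mem_erase] at hs
      exact follow_sep q Tstar s h0 (hTstar s (hsub hs.2)) (hTstar h0 h0S) hs.1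
    have hcov := covering_bound q hπ (pathQs q Tstar h0) h0 hsep
    have hsum : ((pathQs q Tstar h0).map fun j =>
          mass π (S'.filter fun s => q j s ≠ q j h0)).sum ≤
        (K / c i) * mass π S' * Cs := by
      calc ((pathQs q Tstar h0).map fun j =>
            mass π (S'.filter fun s => q j s ≠ q j h0)).sum
          ≤ ((pathQs q Tstar h0).map fun j => (K / c i) * mass π S' * c j).sum := by
            apply List.sum_le_sum
            intro j _
            calc mass π (S'.filter fun s => q j s ≠ q j h0)
                ≤ (K / c i) * c j * mass π S' := hwj j
              _ = (K / c i) * mass π S' * c j := by ring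
        _ = (K / c i) * mass π S' * ((pathQs q Tstar h0).map c).sum := by
            rw [← List.sum_map_mul_left]
        _ = (K / c i) * mass π S' * Cs := by
            rw [hCs, pathCost_eq_sum]
    -- W ≤ (K / c i) * M * Cs
    have hstar : W ≤ (K / c i) * mass π S' * Cs := le_trans hcov hsum
    -- shrink upper bound
    have hK2 : K ≤ 2 * (1 - mass π S'' / mass π S') := by
      rw [hK, hS'']
      exact shrink_le_two_mul (q i) hπ hMS' a0
    -- masses decompose
    have hdecomp : mass π S' = W + π h0 := by
      rw [hWdef]
      unfold mass
      rw [Finset.sum_erase_add _ _ hh0']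
    set W'' := mass π (S''.erase h0) with hW''def
    have hdecomp'' : mass π S'' = W'' + π h0 := by
      rw [hW''def]
      unfold mass
      rw [Finset.sum_erase_add _ _ hh0'']
    -- key inequality: c i * W ≤ 2 * Cs * (W - W'')
    have hkey : c i * W ≤ 2 * Cs * (W - W'') := by
      have h1 : c i * W ≤ K * mass π S' * Cs := by
        have := mul_le_mul_of_nonneg_left hstar (hc i).le
        calc c i * W ≤ c i * ((K / c i) * mass π S' * Cs) := this
          _ = K * mass π S' * Cs := by
              field_simp
              rw [mul_div_cancel_left₀ _ (hc i).ne']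
      have h2 : K * mass π S' ≤ 2 * (mass π S' - mass π S'') := by
        have := mul_le_mul_of_nonneg_right hK2 hMS'.le
        rw [mul_assoc, sub_mul, one_mul, div_mul_cancel₀ _ hMS'.ne'] at this
        linarith
      have h3 : mass π S' - mass π S'' = W - W'' := by
        rw [hdecomp, hdecomp'']; ring
      nlinarith [hCpos]
    -- unfold pathCost at the node
    have hpc : pathCost q c (QTree.node i ch) h0 = c i + pathCost q c (ch a0) h0 := by
      simp [pathCost, ha0]
    rw [if_pos hR'ne, hpc]
    have hS''sub : S'' ⊆ S := le_trans (Finset.filter_subset _ _) hsub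
    by_cases hR'' : (S''.erase h0).Nonempty
    · -- recursive case
      have hW'' : 0 < W'' := mass_pos' hπpos hR''
      have hIH := IH a0 ⟨h0, hh0''⟩ hh0'' hS''sub
      rw [if_pos hR''] at hIH
      have hstep : c i ≤ 2 * Cs * (Real.log W - Real.log W'') := by
        have h1 : Real.log W'' - Real.log W ≤ W'' / W - 1 := by
          have h := Real.log_le_sub_one_of_pos (div_pos hW'' hW)
          rwa [Real.log_div hW''.ne' hW.ne'] at h
        have h3 : W'' / W * W = W'' := div_mul_cancel₀ _ hW.ne'
        nlinarith [mul_le_mul_of_nonneg_left h1 (by positivity : (0:ℝ) ≤ 2 * Cs),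
          hW, hkey, hCpos]
      have hWW'' : W'' ≤ W := by
        nlinarith [hc i, hW, hCpos]
      linarith [hIH]
    · -- child identifies h0 immediately
      have hIH := IH a0 ⟨h0, hh0''⟩ hh0'' hS''sub
      rw [if_neg hR''] at hIH
      have hW''0 : W'' = 0 := by
        rw [hW''def]
        rw [Finset.not_nonempty_iff_eq_empty] at hR''
        rw [hR'']
        simp [mass]
      have hci : c i ≤ 2 * Cs := by
        rw [hW''0] at hkey
        nlinarith [hW]
      have hlog : Real.log μ ≤ Real.log W := Real.log_le_log hμpos hμW
      nlinarith [hCpos]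

end Aux

/-- If `h_0 ∈ S` has `π_S(h_0) > 1/2` and `T^g_S` is the greedy subtree on
`S` with `R_0 = S \ {h_0}`, then the cost of identifying `h_0` in the greedy subtree
satisfies `c_{T^g_S}(h_0) ≤ 2 · C*(h_0) · ( ln( π(R_0) / min_{h∈R_0} π(h) ) + 1 )`. -/
theorem greedy_path_cost_bound [Fintype H] [Fintype A] [DecidableEq H] [DecidableEq A]
    (π : H → ℝ) (hπpos : ∀ h, 0 < π h) (hπsum : ∑ h : H, π h = 1)
    (hH : 1 < Fintype.card H)
    (q : Fin m → H → A) (c : Fin m → ℝ) (hc : ∀ i, 0 < c i)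
    (hdist : ∀ h h' : H, h ≠ h' → ∃ i : Fin m, q i h ≠ q i h')
    (S : Finset H) (hS : 1 < S.card)
    (h0 : H) (h0S : h0 ∈ S) (hh0 : 1 / 2 < restrict π S h0)
    (hR0 : (S.erase h0).Nonempty)
    (Tg : QTree m H A) (hTg : IsGreedy q c π Tg S)
    (Tstar : QTree m H A) (hTstar : ValidOn q Tstar S) :
    pathCost q c Tg h0 ≤
      2 * pathCost q c Tstar h0 *
        (Real.log (mass π (S.erase h0) / (S.erase h0).inf' hR0 π) + 1) := by
  have hπ : ∀ h, 0 ≤ π h := fun h => (hπpos h).le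
  set μ := (S.erase h0).inf' hR0 π with hμdef
  obtain ⟨b, hb, hbμ⟩ := Finset.exists_mem_eq_inf' hR0 π
  have hμpos : 0 < μ := by rw [hμdef, hbμ]; exact hπpos b
  have hμle : ∀ h ∈ S.erase h0, μ ≤ π h := fun h hh => Finset.inf'_le π hh
  -- C* > 0
  have hCpos : 0 < pathCost q c Tstar h0 := by
    obtain ⟨s, hs⟩ := hR0
    rw [Finset.mem_erase] at hs
    cases Tstar with
    | leaf h' =>
      exfalso
      have h1 := hTstar h0 h0S
      have h2 := hTstar s hs.2
      simp only [follow] at h1 h2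
      exact hs.1 (h2.symm.trans h1)
    | node i ch =>
      have : pathCost q c (QTree.node i ch) h0 =
          c i + pathCost q c (ch (q i h0)) h0 := by simp [pathCost]
      rw [this]
      have := pathCost_nonneg' q (fun i => (hc i).le) (ch (q i h0)) h0
      linarith [hc i]
  have hkey := greedy_key π hπpos q c hc S h0 h0S hh0 Tstar hTstar hCpos
    μ hμpos hμle Tg S hTg h0S (Finset.Subset.refl S)
  rw [if_pos hR0] at hkey
  have hW0 : 0 < mass π (S.erase h0) := mass_pos' hπpos hR0
  rw [Real.log_div hW0.ne' hμpos.ne']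
  calc pathCost q c Tg h0
      ≤ 2 * pathCost q c Tstar h0 *
          (Real.log (mass π (S.erase h0)) - Real.log μ) +
        2 * pathCost q c Tstar h0 := hkey
    _ = 2 * pathCost q c Tstar h0 *
          (Real.log (mass π (S.erase h0)) - Real.log μ + 1) := by ring
end ActiveLearning
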